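/- Let K be a number field, let x ≥ 7 and y ≥ 0 be real numbers. If ψ_K(x+y) − ψ_K(x) ≥ (1 + (7·n_K/2)·√(x+y))·log(x+y), then π_K(x+y) − π_K(x) ≥ 1 + (n_K/2)·√(x+y). -/

import Mathlib

open NumberField

/-- A nonzero prime ideal of `𝓞 K` is unramified if its ramification index over the
rational prime below it equals 1. -/
def IsUnramifiedPrimeIdeal (K : Type) [Field K] [NumberField K] (q : Ideal (𝓞 K)) : Prop :=
  q.IsPrime ∧ q ≠ ⊥ ∧
    Ideal.ramificationIdx' (Ideal.comap (algebraMap ℤ (𝓞 K)) q) q = 1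

/-- `ψ_K(x) = Σ log N𝔮`, the sum over pairs `(𝔮, m)` with `𝔮` an unramified nonzero prime
ideal of `𝓞 K`, `m ≥ 1`, and `(N𝔮)^m ≤ x`. -/
noncomputable def psiK (K : Type) [Field K] [NumberField K] (x : ℝ) : ℝ :=
  ∑ᶠ (q : Ideal (𝓞 K)) (m : ℕ)
    (_ : IsUnramifiedPrimeIdeal K q ∧ 1 ≤ m ∧ (Ideal.absNorm q : ℝ) ^ m ≤ x),
    Real.log (Ideal.absNorm q)

/-- `π_K(x)`: the number of nonzero prime ideals of `𝓞 K` of absolute norm at most `x`. -/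
noncomputable def piK (K : Type) [Field K] [NumberField K] (x : ℝ) : ℕ :=
  {p : Ideal (𝓞 K) | p.IsPrime ∧ p ≠ ⊥ ∧ (Ideal.absNorm p : ℝ) ≤ x}.ncard

lemma log_natCast_nonneg' (n : ℕ) : 0 ≤ Real.log n := by
  rcases Nat.eq_zero_or_pos n with h | h
  · simp [h]
  · exact Real.log_nonneg (by exact_mod_cast h)

variable (K : Type) [Field K] [NumberField K]

lemma two_le_absNorm' {q : Ideal (𝓞 K)} (hq : q.IsPrime) (hb : q ≠ ⊥) :
    2 ≤ Ideal.absNorm q := by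
  have h0 : Ideal.absNorm q ≠ 0 := fun h => hb (Ideal.absNorm_eq_zero_iff.mp h)
  have h1 : Ideal.absNorm q ≠ 1 := fun h => hq.ne_top (Ideal.absNorm_eq_one_iff.mp h)
  omega

lemma exists_prime_natCast_mem' {q : Ideal (𝓞 K)} (hq : q.IsPrime) :
    ∀ n : ℕ, 2 ≤ n → (n : 𝓞 K) ∈ q → ∃ p : ℕ, p.Prime ∧ (p : 𝓞 K) ∈ q := by
  intro n
  induction n using Nat.strong_induction_on with
  | _ n ih =>
    intro h2 hmem
    have hpf : n.minFac.Prime := Nat.minFac_prime (by omega)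
    obtain ⟨k, hk⟩ := Nat.minFac_dvd n
    rw [hk, Nat.cast_mul] at hmem
    rcases hq.mem_or_mem hmem with h | h
    · exact ⟨n.minFac, hpf, h⟩
    · rcases Nat.lt_or_ge k 2 with hlt | hge
      · interval_cases k
        · omega
        · rw [Nat.cast_one] at h
          exact absurd (q.eq_top_iff_one.mpr h) hq.ne_top
      · have h2k : 2 * k ≤ n := hk ▸ Nat.mul_le_mul_right k hpf.two_le
        exact ih k (by omega) hge h

lemma absNorm_span_natCast' (p : ℕ) :
    Ideal.absNorm (Ideal.span {((p:ℕ) : 𝓞 K)}) = p ^ Module.finrank ℚ K := by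
  rw [Ideal.absNorm_span_singleton]
  have h1 : ((p:ℕ) : 𝓞 K) = algebraMap ℤ (𝓞 K) ((p:ℕ) : ℤ) := by push_cast; simp
  rw [h1, Algebra.norm_algebraMap_of_basis (Module.Free.chooseBasis ℤ (𝓞 K)),
    ← Module.finrank_eq_card_chooseBasisIndex, NumberField.RingOfIntegers.rank,
    Int.natAbs_pow]
  simp

lemma absNorm_structure' {q : Ideal (𝓞 K)} (hq : q.IsPrime) (hb : q ≠ ⊥) :
    ∃ p : ℕ, p.Prime ∧ ((p : 𝓞 K) ∈ q) ∧ (Ideal.absNorm q).minFac = p ∧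
      p ≤ Ideal.absNorm q := by
  have h2 := two_le_absNorm' K hq hb
  obtain ⟨p, hp, hpq⟩ := exists_prime_natCast_mem' K hq (Ideal.absNorm q) h2 (Ideal.absNorm_mem q)
  have hle : Ideal.span {((p:ℕ) : 𝓞 K)} ≤ q := (Ideal.span_singleton_le_iff_mem q).mpr hpq
  have hdvd : Ideal.absNorm q ∣ p ^ Module.finrank ℚ K := by
    rw [← absNorm_span_natCast' K p]
    exact Ideal.absNorm_dvd_absNorm_of_le hle
  obtain ⟨j, _, hNq⟩ := (Nat.dvd_prime_pow hp).mp hdvd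
  have hj1 : j ≠ 0 := by
    rintro rfl
    rw [pow_zero] at hNq
    omega
  refine ⟨p, hp, hpq, ?_, ?_⟩
  · rw [hNq, hp.pow_minFac hj1]
  · rw [hNq]; exact Nat.le_self_pow hj1 p

open UniqueFactorizationMonoid in
lemma fiber_card_le' (p : ℕ) (hp : p.Prime) (s : Finset (Ideal (𝓞 K)))
    (hs : ∀ q ∈ s, q.IsPrime ∧ (p : 𝓞 K) ∈ q) : s.card ≤ Module.finrank ℚ K := by
  classical
  set I : Ideal (𝓞 K) := Ideal.span {((p:ℕ) : 𝓞 K)} with hI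
  have hp0 : ((p:ℕ) : 𝓞 K) ≠ 0 := Nat.cast_ne_zero.mpr hp.pos.ne'
  have hIbot : I ≠ ⊥ := by simpa [hI, Ideal.span_singleton_eq_bot] using hp0
  have hsub : s ⊆ (normalizedFactors I).toFinset := by
    intro q hqs
    rw [Multiset.mem_toFinset, Ideal.mem_normalizedFactors_iff hIbot]
    exact ⟨(hs q hqs).1, (Ideal.span_singleton_le_iff_mem q).mpr (hs q hqs).2⟩
  have hcard : s.card ≤ Multiset.card (normalizedFactors I) :=
    le_trans (Finset.card_le_card hsub) (Multiset.toFinset_card_le _)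
  have hnorm : Ideal.absNorm I = p ^ Module.finrank ℚ K := absNorm_span_natCast' K p
  have hprodI : (normalizedFactors I).prod = I :=
    associated_iff_eq.mp (prod_normalizedFactors hIbot)
  have hprod : ((normalizedFactors I).map Ideal.absNorm).prod = p ^ Module.finrank ℚ K := by
    rw [← map_multiset_prod, hprodI, hnorm]
  have hge : ∀ n ∈ (normalizedFactors I).map Ideal.absNorm, p ≤ n := by
    rintro n hn
    obtain ⟨q, hq, rfl⟩ := Multiset.mem_map.mp hn
    rw [Ideal.mem_normalizedFactors_iff hIbot] at hq
    have hd : Ideal.absNorm q ∣ p ^ Module.finrank ℚ K := by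
      rw [← hnorm]; exact Ideal.absNorm_dvd_absNorm_of_le hq.2
    obtain ⟨j, _, hj⟩ := (Nat.dvd_prime_pow hp).mp hd
    have hjne : j ≠ 0 := by
      rintro rfl
      rw [pow_zero] at hj
      exact hq.1.ne_top (Ideal.absNorm_eq_one_iff.mp hj)
    rw [hj]; exact Nat.le_self_pow hjne p
  have hpow : p ^ Multiset.card (normalizedFactors I) ≤ p ^ Module.finrank ℚ K := by
    calc p ^ Multiset.card (normalizedFactors I)
        = p ^ Multiset.card ((normalizedFactors I).map Ideal.absNorm) := by
          rw [Multiset.card_map]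
      _ ≤ ((normalizedFactors I).map Ideal.absNorm).prod :=
          Multiset.pow_card_le_prod hge
      _ = p ^ Module.finrank ℚ K := hprod
  exact hcard.trans ((Nat.pow_le_pow_iff_right hp.one_lt).mp hpow)

lemma finite_absNorm_le' (B : ℕ) : {I : Ideal (𝓞 K) | Ideal.absNorm I ≤ B}.Finite := by
  have hsub : {I : Ideal (𝓞 K) | Ideal.absNorm I ≤ B} ⊆
      ⋃ k ∈ Set.Iic B, {I : Ideal (𝓞 K) | Ideal.absNorm I = k} := by
    intro I hI
    exact Set.mem_biUnion hI rfl
  exact Set.Finite.subset (Set.Finite.biUnion (Set.finite_Iic B)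
    fun k _ => Ideal.finite_setOf_absNorm_eq k) hsub

lemma count_primes_le' (T : ℝ) :
    ({q : Ideal (𝓞 K) | q.IsPrime ∧ q ≠ ⊥ ∧ (Ideal.absNorm q : ℝ) ≤ T}).ncard
      ≤ Module.finrank ℚ K * ⌊T⌋₊ := by
  classical
  have hsub : {q : Ideal (𝓞 K) | q.IsPrime ∧ q ≠ ⊥ ∧ (Ideal.absNorm q : ℝ) ≤ T} ⊆
      {I : Ideal (𝓞 K) | Ideal.absNorm I ≤ ⌊T⌋₊} := fun q hq => Nat.le_floor hq.2.2
  have hfin := (finite_absNorm_le' K ⌊T⌋₊).subset hsub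
  rw [Set.ncard_eq_toFinset_card _ hfin]
  set F := hfin.toFinset with hF
  have hmaps : ∀ q ∈ F, (Ideal.absNorm q).minFac ∈ Finset.Icc 2 ⌊T⌋₊ := by
    intro q hq
    rw [hF, Set.Finite.mem_toFinset] at hq
    obtain ⟨p, hp, _, hmin, hpN⟩ := absNorm_structure' K hq.1 hq.2.1
    rw [hmin]
    exact Finset.mem_Icc.mpr ⟨hp.two_le, le_trans hpN (Nat.le_floor hq.2.2)⟩
  have hfib : ∀ b ∈ Finset.Icc 2 ⌊T⌋₊,
      (F.filter (fun q => (Ideal.absNorm q).minFac = b)).card ≤ Module.finrank ℚ K := by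
    intro b _
    by_cases hb : b.Prime
    · apply fiber_card_le' K b hb
      intro q hq
      rw [Finset.mem_filter, hF, Set.Finite.mem_toFinset] at hq
      obtain ⟨⟨hq1, hq2, _⟩, hq4⟩ := hq
      obtain ⟨p, hp, hpq, hmin, _⟩ := absNorm_structure' K hq1 hq2
      rw [hmin] at hq4
      exact ⟨hq1, hq4 ▸ hpq⟩
    · have : F.filter (fun q => (Ideal.absNorm q).minFac = b) = ∅ := by
        rw [Finset.filter_eq_empty_iff]
        intro q hq hq4
        rw [hF, Set.Finite.mem_toFinset] at hq
        obtain ⟨p, hp, _, hmin, _⟩ := absNorm_structure' K hq.1 hq.2.1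
        exact hb (hq4 ▸ hmin ▸ hp)
      simp [this]
  calc F.card ≤ Module.finrank ℚ K * (Finset.Icc 2 ⌊T⌋₊).card :=
        Finset.card_le_mul_card_image_of_maps_to hmaps _ hfib
    _ ≤ Module.finrank ℚ K * ⌊T⌋₊ := by
        apply Nat.mul_le_mul_left
        rw [Nat.card_Icc]
        omega


/-- for a number field `K` and reals `x ≥ 7`, `y ≥ 0`, if
`ψ_K(x+y) − ψ_K(x) ≥ (1 + (7n_K/2)√(x+y))·log(x+y)` then
`π_K(x+y) − π_K(x) ≥ 1 + (n_K/2)√(x+y)`. -/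
theorem piK_interval_of_psiK_interval (K : Type) [Field K] [NumberField K]
    (x y : ℝ) (hx : 7 ≤ x) (hy : 0 ≤ y)
    (h : psiK K (x + y) - psiK K x ≥
      (1 + 7 * (Module.finrank ℚ K : ℝ) / 2 * Real.sqrt (x + y)) * Real.log (x + y)) :
    (piK K (x + y) : ℝ) - piK K x ≥
      1 + (Module.finrank ℚ K : ℝ) / 2 * Real.sqrt (x + y) := by
  classical
  set s : ℝ := x + y with hsdef
  set d : ℕ := Module.finrank ℚ K with hddef
  have hs7 : 7 ≤ s := by rw [hsdef]; linarith
  have hs1 : 1 ≤ s := by linarith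
  have hs0 : 0 ≤ s := by linarith
  have hxs : x ≤ s := by rw [hsdef]; linarith
  have hL : 0 < Real.log s := Real.log_pos (by linarith)
  have hsq0 : 0 ≤ Real.sqrt s := Real.sqrt_nonneg s
  have hsqs : Real.sqrt s ≤ s := by
    calc Real.sqrt s ≤ Real.sqrt (s ^ 2) := Real.sqrt_le_sqrt (by nlinarith)
      _ = s := Real.sqrt_sq hs0
  -- finiteness of the exponent sets
  have hM : ∀ (q : Ideal (𝓞 K)) (t : ℝ),
      {m : ℕ | IsUnramifiedPrimeIdeal K q ∧ 1 ≤ m ∧ (Ideal.absNorm q : ℝ) ^ m ≤ t}.Finite := by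
    intro q t
    apply (Set.finite_Iic ⌊t⌋₊).subset
    rintro m ⟨hU, hm1, hmt⟩
    have h2 : 2 ≤ Ideal.absNorm q := two_le_absNorm' K hU.1 hU.2.1
    have h2r : (2:ℝ) ≤ (Ideal.absNorm q : ℝ) := by exact_mod_cast h2
    have hmr : (m:ℝ) ≤ t := by
      calc (m:ℝ) ≤ 2 ^ m := by exact_mod_cast (Nat.lt_two_pow_self (n := m)).le
        _ ≤ (Ideal.absNorm q : ℝ) ^ m := by
            exact pow_le_pow_left₀ (by norm_num) h2r m
        _ ≤ t := hmt
    exact Nat.le_floor hmr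
  set G : ℝ → Ideal (𝓞 K) → ℝ := fun t q =>
    (((hM q t).toFinset.card : ℝ)) * Real.log (Ideal.absNorm q) with hGdef
  -- the ambient finite set of primes
  have hQfin : {q : Ideal (𝓞 K) | q.IsPrime ∧ q ≠ ⊥ ∧ (Ideal.absNorm q : ℝ) ≤ s}.Finite := by
    apply (finite_absNorm_le' K ⌊s⌋₊).subset
    rintro q ⟨_, _, hle⟩
    exact Nat.le_floor hle
  set Q : Finset (Ideal (𝓞 K)) := hQfin.toFinset with hQdef
  have hmemQ : ∀ q, q ∈ Q ↔ q.IsPrime ∧ q ≠ ⊥ ∧ (Ideal.absNorm q : ℝ) ≤ s := by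
    intro q
    rw [hQdef, Set.Finite.mem_toFinset, Set.mem_setOf_eq]
  -- psiK as a finite sum
  have hpsi : ∀ t : ℝ, t ≤ s → psiK K t = ∑ q ∈ Q, G t q := by
    intro t ht
    have h1 : psiK K t = ∑ᶠ q, G t q := by
      rw [psiK]
      refine finsum_congr fun q => ?_
      calc (∑ᶠ (m : ℕ) (_ : IsUnramifiedPrimeIdeal K q ∧ 1 ≤ m ∧
              (Ideal.absNorm q : ℝ) ^ m ≤ t), Real.log (Ideal.absNorm q))
          = ∑ m ∈ (hM q t).toFinset, Real.log (Ideal.absNorm q) :=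
            finsum_mem_eq_finite_toFinset_sum _ (hM q t)
        _ = G t q := by rw [Finset.sum_const, nsmul_eq_mul, hGdef]
    rw [h1]
    apply finsum_eq_sum_of_support_subset
    intro q hq
    rw [Function.mem_support] at hq
    have hne : (hM q t).toFinset.Nonempty := by
      by_contra hcon
      rw [Finset.not_nonempty_iff_eq_empty] at hcon
      rw [hGdef] at hq
      simp [hcon] at hq
    obtain ⟨m, hm⟩ := hne
    rw [Set.Finite.mem_toFinset] at hm
    obtain ⟨hU, hm1, hmt⟩ := hm
    have h2 : 2 ≤ Ideal.absNorm q := two_le_absNorm' K hU.1 hU.2.1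
    have h1r : (1:ℝ) ≤ (Ideal.absNorm q : ℝ) := by exact_mod_cast Nat.one_le_of_lt h2
    refine Finset.mem_coe.mpr ((hmemQ q).mpr ⟨hU.1, hU.2.1, ?_⟩)
    calc (Ideal.absNorm q : ℝ) ≤ (Ideal.absNorm q : ℝ) ^ m := le_self_pow₀ h1r (by omega)
      _ ≤ t := hmt
      _ ≤ s := ht
  -- basic bounds on G
  have hG0 : ∀ (t : ℝ) q, 0 ≤ G t q := by
    intro t q
    exact mul_nonneg (Nat.cast_nonneg _) (log_natCast_nonneg' _)
  have hGs : ∀ (t : ℝ) q, 1 ≤ t → G t q ≤ Real.log t := by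
    intro t q ht
    rcases Finset.eq_empty_or_nonempty (hM q t).toFinset with he | hne
    · rw [hGdef]
      simp only [he, Finset.card_empty, Nat.cast_zero, zero_mul]
      exact Real.log_nonneg ht
    · set m0 := Finset.max' _ hne with hm0def
      have hm0 := Finset.max'_mem _ hne
      rw [Set.Finite.mem_toFinset] at hm0
      obtain ⟨hU, hm01, hm0t⟩ := hm0
      have h2 : 2 ≤ Ideal.absNorm q := two_le_absNorm' K hU.1 hU.2.1
      have hNpos : (0:ℝ) < (Ideal.absNorm q : ℝ) := by
        have : (0:ℕ) < Ideal.absNorm q := by omega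
        exact_mod_cast this
      have hsubI : (hM q t).toFinset ⊆ Finset.Icc 1 m0 := by
        intro m hm
        have hm' := (Set.Finite.mem_toFinset _).mp hm
        exact Finset.mem_Icc.mpr ⟨hm'.2.1, Finset.le_max' _ m hm⟩
      have hcard : (hM q t).toFinset.card ≤ m0 := by
        calc (hM q t).toFinset.card ≤ (Finset.Icc 1 m0).card := Finset.card_le_card hsubI
          _ = m0 := by rw [Nat.card_Icc]; omega
      have hlogN : 0 ≤ Real.log (Ideal.absNorm q) := log_natCast_nonneg' _
      calc G t q ≤ (m0:ℝ) * Real.log (Ideal.absNorm q) := by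
            rw [hGdef]
            exact mul_le_mul_of_nonneg_right (by exact_mod_cast hcard) hlogN
        _ = Real.log ((Ideal.absNorm q : ℝ) ^ m0) := by rw [Real.log_pow]
        _ ≤ Real.log t := Real.log_le_log (pow_pos hNpos m0) hm0t
  -- equality case: sqrt s < N q and N q ≤ x
  have hMeq : ∀ q, Real.sqrt s < (Ideal.absNorm q : ℝ) → (Ideal.absNorm q : ℝ) ≤ x →
      G s q = G x q := by
    intro q h1 h2
    have hseteq : {m : ℕ | IsUnramifiedPrimeIdeal K q ∧ 1 ≤ m ∧ (Ideal.absNorm q : ℝ) ^ m ≤ s}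
        = {m : ℕ | IsUnramifiedPrimeIdeal K q ∧ 1 ≤ m ∧ (Ideal.absNorm q : ℝ) ^ m ≤ x} := by
      ext m
      simp only [Set.mem_setOf_eq]
      constructor
      · rintro ⟨hU, hm1, hms⟩
        refine ⟨hU, hm1, ?_⟩
        rcases eq_or_lt_of_le hm1 with heq | hm2
        · rw [← heq] at hms ⊢
          rw [pow_one]
          exact h2
        · exfalso
          have h2n := two_le_absNorm' K hU.1 hU.2.1
          have hN1 : (1:ℝ) ≤ (Ideal.absNorm q : ℝ) := by exact_mod_cast Nat.one_le_of_lt h2n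
          have hgt : s < (Ideal.absNorm q : ℝ) ^ m := by
            have hsq : s < (Ideal.absNorm q : ℝ) ^ 2 := by
              have hss := Real.sq_sqrt hs0
              nlinarith [Real.sqrt_nonneg s]
            calc s < (Ideal.absNorm q : ℝ) ^ 2 := hsq
              _ ≤ (Ideal.absNorm q : ℝ) ^ m := pow_le_pow_right₀ hN1 hm2
          linarith
      · rintro ⟨hU, hm1, hmx⟩
        exact ⟨hU, hm1, le_trans hmx hxs⟩
    have hfeq : (hM q s).toFinset = (hM q x).toFinset := by
      ext m
      rw [Set.Finite.mem_toFinset, Set.Finite.mem_toFinset, hseteq]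
    rw [hGdef]
    simp only [hfeq]
  -- termwise bound
  have hterm : ∀ q ∈ Q, G s q - G x q ≤
      (if (Ideal.absNorm q : ℝ) ≤ Real.sqrt s then Real.log s else 0)
      + (if x < (Ideal.absNorm q : ℝ) then Real.log s else 0) := by
    intro q _
    by_cases h1 : (Ideal.absNorm q : ℝ) ≤ Real.sqrt s
    · rw [if_pos h1]
      have ha := hGs s q hs1
      have hb := hG0 x q
      have hc : (0:ℝ) ≤ if x < (Ideal.absNorm q : ℝ) then Real.log s else 0 := by
        split_ifs
        · exact hL.le
        · exact le_refl 0
      linarith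
    · rw [if_neg h1]
      push_neg at h1
      by_cases h2 : x < (Ideal.absNorm q : ℝ)
      · rw [if_pos h2]
        have ha := hGs s q hs1
        have hb := hG0 x q
        linarith
      · rw [if_neg h2]
        push_neg at h2
        rw [hMeq q h1 h2]
        simp
  -- summed bound
  have hsum : psiK K s - psiK K x ≤
      ((Q.filter (fun q => (Ideal.absNorm q : ℝ) ≤ Real.sqrt s)).card : ℝ) * Real.log s
      + ((Q.filter (fun q => x < (Ideal.absNorm q : ℝ))).card : ℝ) * Real.log s := by
    rw [hpsi s le_rfl, hpsi x hxs, ← Finset.sum_sub_distrib]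
    calc ∑ q ∈ Q, (G s q - G x q)
        ≤ ∑ q ∈ Q, ((if (Ideal.absNorm q : ℝ) ≤ Real.sqrt s then Real.log s else 0)
          + (if x < (Ideal.absNorm q : ℝ) then Real.log s else 0)) :=
          Finset.sum_le_sum hterm
      _ = (∑ q ∈ Q, if (Ideal.absNorm q : ℝ) ≤ Real.sqrt s then Real.log s else 0)
          + ∑ q ∈ Q, if x < (Ideal.absNorm q : ℝ) then Real.log s else 0 :=
          Finset.sum_add_distrib
      _ = _ := by
          rw [← Finset.sum_filter, ← Finset.sum_filter, Finset.sum_const, Finset.sum_const,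
            nsmul_eq_mul, nsmul_eq_mul]
  -- bound the first count
  have hc1 : ((Q.filter (fun q => (Ideal.absNorm q : ℝ) ≤ Real.sqrt s)).card : ℝ)
      ≤ (d:ℝ) * Real.sqrt s := by
    have hS1fin : {q : Ideal (𝓞 K) | q.IsPrime ∧ q ≠ ⊥ ∧
        (Ideal.absNorm q : ℝ) ≤ Real.sqrt s}.Finite := by
      apply hQfin.subset
      rintro q ⟨a, b, c⟩
      exact ⟨a, b, le_trans c hsqs⟩
    have hsub : Q.filter (fun q => (Ideal.absNorm q : ℝ) ≤ Real.sqrt s) ⊆ hS1fin.toFinset := by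
      intro q hq
      rw [Finset.mem_filter] at hq
      rw [Set.Finite.mem_toFinset]
      obtain ⟨hqQ, hle⟩ := hq
      obtain ⟨hp, hb, _⟩ := (hmemQ q).mp hqQ
      exact ⟨hp, hb, hle⟩
    have hle1 : (Q.filter (fun q => (Ideal.absNorm q : ℝ) ≤ Real.sqrt s)).card
        ≤ d * ⌊Real.sqrt s⌋₊ := by
      calc (Q.filter (fun q => (Ideal.absNorm q : ℝ) ≤ Real.sqrt s)).card
          ≤ hS1fin.toFinset.card := Finset.card_le_card hsub
        _ = {q : Ideal (𝓞 K) | q.IsPrime ∧ q ≠ ⊥ ∧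
              (Ideal.absNorm q : ℝ) ≤ Real.sqrt s}.ncard :=
            (Set.ncard_eq_toFinset_card _ hS1fin).symm
        _ ≤ d * ⌊Real.sqrt s⌋₊ := count_primes_le' K (Real.sqrt s)
    have hfloor : ((⌊Real.sqrt s⌋₊ : ℕ) : ℝ) ≤ Real.sqrt s := Nat.floor_le hsq0
    calc ((Q.filter (fun q => (Ideal.absNorm q : ℝ) ≤ Real.sqrt s)).card : ℝ)
        ≤ ((d * ⌊Real.sqrt s⌋₊ : ℕ) : ℝ) := by exact_mod_cast hle1
      _ = (d:ℝ) * ((⌊Real.sqrt s⌋₊ : ℕ) : ℝ) := by push_cast; ring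
      _ ≤ (d:ℝ) * Real.sqrt s := by
          exact mul_le_mul_of_nonneg_left hfloor (Nat.cast_nonneg d)
  -- bound the second count
  have hc2 : ((Q.filter (fun q => x < (Ideal.absNorm q : ℝ))).card : ℝ)
      ≤ (piK K s : ℝ) - piK K x := by
    have hsubPi : {p : Ideal (𝓞 K) | p.IsPrime ∧ p ≠ ⊥ ∧ (Ideal.absNorm p : ℝ) ≤ x}
        ⊆ {p : Ideal (𝓞 K) | p.IsPrime ∧ p ≠ ⊥ ∧ (Ideal.absNorm p : ℝ) ≤ s} := by
      rintro q ⟨a, b, c⟩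
      exact ⟨a, b, le_trans c hxs⟩
    have hdfin : ({p : Ideal (𝓞 K) | p.IsPrime ∧ p ≠ ⊥ ∧ (Ideal.absNorm p : ℝ) ≤ s}
        \ {p : Ideal (𝓞 K) | p.IsPrime ∧ p ≠ ⊥ ∧ (Ideal.absNorm p : ℝ) ≤ x}).Finite :=
      hQfin.diff
    have hdiff : (({p : Ideal (𝓞 K) | p.IsPrime ∧ p ≠ ⊥ ∧ (Ideal.absNorm p : ℝ) ≤ s}
        \ {p : Ideal (𝓞 K) | p.IsPrime ∧ p ≠ ⊥ ∧ (Ideal.absNorm p : ℝ) ≤ x}).ncard : ℝ)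
        = (piK K s : ℝ) - piK K x := by
      have heq := Set.ncard_diff_add_ncard_of_subset hsubPi hQfin
      rw [piK, piK]
      have := congrArg (fun n : ℕ => (n : ℝ)) heq
      push_cast at this
      linarith
    rw [← hdiff]
    have hsub2 : Q.filter (fun q => x < (Ideal.absNorm q : ℝ)) ⊆ hdfin.toFinset := by
      intro q hq
      rw [Finset.mem_filter] at hq
      rw [Set.Finite.mem_toFinset]
      obtain ⟨hqQ, hlt⟩ := hq
      have hm := (hmemQ q).mp hqQ
      exact ⟨hm, fun hc => absurd hc.2.2 (not_le.mpr hlt)⟩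
    have : (Q.filter (fun q => x < (Ideal.absNorm q : ℝ))).card
        ≤ ({p : Ideal (𝓞 K) | p.IsPrime ∧ p ≠ ⊥ ∧ (Ideal.absNorm p : ℝ) ≤ s}
          \ {p : Ideal (𝓞 K) | p.IsPrime ∧ p ≠ ⊥ ∧ (Ideal.absNorm p : ℝ) ≤ x}).ncard := by
      rw [Set.ncard_eq_toFinset_card _ hdfin]
      exact Finset.card_le_card hsub2
    exact_mod_cast this
  -- combine
  have hkey : (1 + 7 * (d:ℝ) / 2 * Real.sqrt s) * Real.log s ≤
      ((d:ℝ) * Real.sqrt s + ((piK K s : ℝ) - piK K x)) * Real.log s := by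
    refine le_trans h ?_
    calc psiK K s - psiK K x
        ≤ ((Q.filter (fun q => (Ideal.absNorm q : ℝ) ≤ Real.sqrt s)).card : ℝ) * Real.log s
          + ((Q.filter (fun q => x < (Ideal.absNorm q : ℝ))).card : ℝ) * Real.log s := hsum
      _ ≤ ((d:ℝ) * Real.sqrt s) * Real.log s + ((piK K s : ℝ) - piK K x) * Real.log s := by
          exact add_le_add (mul_le_mul_of_nonneg_right hc1 hL.le)
            (mul_le_mul_of_nonneg_right hc2 hL.le)
      _ = ((d:ℝ) * Real.sqrt s + ((piK K s : ℝ) - piK K x)) * Real.log s := by ring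
  have hmain : 1 + 7 * (d:ℝ) / 2 * Real.sqrt s ≤
      (d:ℝ) * Real.sqrt s + ((piK K s : ℝ) - piK K x) :=
    le_of_mul_le_mul_right hkey hL
  have hds : 0 ≤ (d:ℝ) * Real.sqrt s := mul_nonneg (Nat.cast_nonneg d) hsq0
  nlinarith [hds]
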